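/- Let (P₀, ι, a, p) be a PASP such that P₀ is OLON-free, let q be a ground atom, and let R ⊆ P₀ be a relevance-closed subprogram of P₀ with atom set B_R such that q ∈ B_R. Let ι_R = {i ∈ ι : aᵢ ∈ B_R}. Then the lower probability of q in the PASP (P₀, ι, a, p) equals the lower probability of q in the PASP (R, ι_R, a restricted to ι_R, p restricted to ι_R). -/

import Mathlib

open scoped Classical

/-- A ground normal rule: a head atom, a finite positive body and a finite negative body. -/
structure GRule (α : Type) where
  head : α
  pos : Finset α
  neg : Finset α

namespace ASP

variable {α ι : Type}

/-- The Gelfond–Lifschitz reduct of a program `P` w.r.t. an interpretation `I`: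
the set of positive rules `(head r, pos r)` for rules whose negative body avoids `I`. -/
def glReduct (P : Set (GRule α)) (I : Set α) : Set (α × Finset α) :=
  {hb | ∃ r ∈ P, (∀ c ∈ r.neg, c ∉ I) ∧ hb = (r.head, r.pos)}

/-- `J` is a model of a set of positive rules `Q`. -/
def IsModelPos (Q : Set (α × Finset α)) (J : Set α) : Prop :=
  ∀ hb ∈ Q, (∀ b ∈ hb.2, b ∈ J) → hb.1 ∈ J

/-- `A` is an answer set (stable model) of `P`. -/
def IsAnswerSet (P : Set (GRule α)) (A : Set α) : Prop :=
  IsModelPos (glReduct P A) A ∧ ∀ B, B ⊂ A → ¬ IsModelPos (glReduct P A) B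

/-- The set of answer sets of `P`. -/
def AS (P : Set (GRule α)) : Set (Set α) := {A | IsAnswerSet P A}

/-- Operator deriving new true atoms, given a three-valued interpretation `I = (I_T, I_F)`. -/
def opTrue (P : Set (GRule α)) (I : Set α × Set α) : Set α →o Set α where
  toFun T := {a | a ∉ I.1 ∧ ∃ r ∈ P, r.head = a ∧ (∀ b ∈ r.pos, b ∈ I.1 ∪ T) ∧
    ∀ c ∈ r.neg, c ∈ I.2}
  monotone' := by
    intro T T' hT a ha
    obtain ⟨h1, r, hr, hh, hp, hn⟩ := ha
    exact ⟨h1, r, hr, hh, fun b hb => (hp b hb).imp id fun h => hT h, hn⟩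

/-- Operator deriving new false atoms, given a three-valued interpretation `I = (I_T, I_F)`. -/
def opFalse (P : Set (GRule α)) (I : Set α × Set α) : Set α →o Set α where
  toFun F := {a | a ∉ I.2 ∧ ∀ r ∈ P, r.head = a →
    (∃ b ∈ r.pos, b ∈ I.2 ∪ F) ∨ ∃ c ∈ r.neg, c ∈ I.1}
  monotone' := by
    intro F F' hF a ha
    refine ⟨ha.1, fun r hr hh => ?_⟩
    rcases ha.2 r hr hh with ⟨b, hb, hbm⟩ | h
    · exact Or.inl ⟨b, hb, hbm.imp id fun h => hF h⟩
    · exact Or.inr h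

/-- The iterated fixpoint operator: `IFP(I) = I ⊔ (lfp (opTrue I), gfp (opFalse I))`. -/
def IFP (P : Set (GRule α)) (I : Set α × Set α) : Set α × Set α :=
  I ⊔ (OrderHom.lfp (opTrue P I), OrderHom.gfp (opFalse P I))

/-- The well-founded model of `P`: the least fixpoint of `IFP`
(as the infimum of all prefixpoints of the monotone operator `IFP`). -/
def WFM (P : Set (GRule α)) : Set α × Set α :=
  sInf {I | IFP P I ≤ I}

/-- The WF reduct of `P`: delete rules whose positive body meets the false atoms or whose
negative body meets the true atoms of the WFM, and remove from the remaining rules the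
true atoms from positive bodies and the false atoms from negative bodies. -/
noncomputable def WFreduct (P : Set (GRule α)) : Set (GRule α) :=
  {r' | ∃ r ∈ P, (∀ b ∈ r.pos, b ∉ (WFM P).2) ∧ (∀ c ∈ r.neg, c ∉ (WFM P).1) ∧
    r' = ⟨r.head, r.pos.filter (fun b => b ∉ (WFM P).1),
          r.neg.filter (fun c => c ∉ (WFM P).2)⟩}

/-- The set of atoms occurring in a set of rules (as heads or in bodies). -/
def atomsOf (R : Set (GRule α)) : Set α :=
  {a | ∃ r ∈ R, a = r.head ∨ a ∈ r.pos ∨ a ∈ r.neg}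

/-- `R` is a relevance-closed subprogram of `P`. -/
def RelevanceClosed (P R : Set (GRule α)) : Prop :=
  R ⊆ P ∧ ∀ r ∈ P, r.head ∈ atomsOf R → r ∈ R

/-- Signed edge of the dependency graph of `P`; `s = true` marks a negative edge. -/
def Edge (P : Set (GRule α)) (x y : α) (s : Bool) : Prop :=
  ∃ r ∈ P, r.head = x ∧ ((s = false ∧ y ∈ r.pos) ∨ (s = true ∧ y ∈ r.neg))

/-- `Reaches P x y b`: there is a nonempty walk in the signed dependency graph from `x`
to `y` whose number of negative edges has parity `b` (`true` = odd). -/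
inductive Reaches (P : Set (GRule α)) : α → α → Bool → Prop
  | single {x y s} : Edge P x y s → Reaches P x y s
  | step {x y z s t} : Edge P x y s → Reaches P y z t → Reaches P x z (xor s t)

/-- `P` has no odd loops over negation. -/
def OLONFree (P : Set (GRule α)) : Prop := ∀ a : α, ¬ Reaches P a a true

/-- The program of a world `w`: `P₀` plus the facts `aᵢ` for `i ∈ w`. -/
def worldProg (P0 : Set (GRule α)) (atom : ι → α) (w : Finset ι) : Set (GRule α) :=
  P0 ∪ {r | ∃ i ∈ w, r = ⟨atom i, ∅, ∅⟩}

/-- The probability of a world `w` of a PASP with index set `S`. -/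
noncomputable def worldP (prob : ι → ℝ) (S w : Finset ι) : ℝ :=
  (∏ i ∈ w, prob i) * ∏ i ∈ S \ w, (1 - prob i)

/-- The upper probability of a query `q` in the PASP `(P₀, S, atom, prob)`. -/
noncomputable def UP (P0 : Set (GRule α)) (atom : ι → α) (prob : ι → ℝ)
    (S : Finset ι) (q : α) : ℝ :=
  ∑ w ∈ S.powerset.filter (fun w => ∃ A ∈ AS (worldProg P0 atom w), q ∈ A),
    worldP prob S w

/-- The lower probability of a query `q` in the PASP `(P₀, S, atom, prob)`. -/
noncomputable def LP (P0 : Set (GRule α)) (atom : ι → α) (prob : ι → ℝ)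
    (S : Finset ι) (q : α) : ℝ :=
  ∑ w ∈ S.powerset.filter (fun w => ∀ A ∈ AS (worldProg P0 atom w), q ∈ A),
    worldP prob S w

/-- `(P₀, S, atom, prob)` is a PASP: `P₀` is finite, the probabilistic atoms are pairwise
distinct, none of them is the head of a rule of `P₀`, and probabilities lie in `[0,1]`. -/
def IsPASP (P0 : Set (GRule α)) (atom : ι → α) (prob : ι → ℝ) (S : Finset ι) : Prop :=
  P0.Finite ∧ Set.InjOn atom ↑S ∧ (∀ i ∈ S, ∀ r ∈ P0, r.head ≠ atom i) ∧
    ∀ i ∈ S, prob i ∈ Set.Icc (0 : ℝ) 1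

end ASP


namespace ASP

variable {α : Type}

lemma reaches_mono {P Q : Set (GRule α)} (h : ∀ x y s, Edge P x y s → Edge Q x y s)
    {a b : α} {s : Bool} (hr : Reaches P a b s) : Reaches Q a b s := by
  induction hr with
  | single e => exact .single (h _ _ _ e)
  | step e _ ih => exact .step (h _ _ _ e) ih

lemma olonFree_mono {P Q : Set (GRule α)} (h : ∀ x y s, Edge P x y s → Edge Q x y s)
    (hQ : OLONFree Q) : OLONFree P := fun a ha => hQ a (reaches_mono h ha)

lemma edge_mono {P Q : Set (GRule α)} (h : P ⊆ Q) :
    ∀ x y s, Edge P x y s → Edge Q x y s := by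
  rintro x y s ⟨r, hr, hh, hb⟩; exact ⟨r, h hr, hh, hb⟩

lemma reaches_trans {P : Set (GRule α)} {a b c : α} {s t : Bool}
    (h1 : Reaches P a b s) (h2 : Reaches P b c t) : Reaches P a c (xor s t) := by
  induction h1 with
  | single e => exact .step e h2
  | step e _ ih => rw [Bool.xor_assoc]; exact .step e (ih h2)

lemma head_mem_atomsOf {P : Set (GRule α)} {r : GRule α} (hr : r ∈ P) : r.head ∈ atomsOf P :=
  ⟨r, hr, Or.inl rfl⟩

lemma pos_mem_atomsOf {P : Set (GRule α)} {r : GRule α} (hr : r ∈ P) {b : α} (hb : b ∈ r.pos) :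
    b ∈ atomsOf P := ⟨r, hr, Or.inr (Or.inl hb)⟩

lemma neg_mem_atomsOf {P : Set (GRule α)} {r : GRule α} (hr : r ∈ P) {c : α} (hc : c ∈ r.neg) :
    c ∈ atomsOf P := ⟨r, hr, Or.inr (Or.inr hc)⟩

lemma reaches_target_mem {P : Set (GRule α)} {a b : α} {s : Bool} (h : Reaches P a b s) :
    b ∈ atomsOf P := by
  induction h with
  | @single x y s e =>
    obtain ⟨r, hr, _, hb⟩ := e
    rcases hb with ⟨_, hb⟩ | ⟨_, hb⟩
    · exact pos_mem_atomsOf hr hb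
    · exact neg_mem_atomsOf hr hb
  | step _ _ ih => exact ih

lemma atomsOf_finite {P : Set (GRule α)} (h : P.Finite) : (atomsOf P).Finite := by
  have hsub : atomsOf P ⊆ ⋃ r ∈ P, ({r.head} ∪ ↑r.pos ∪ ↑r.neg) := by
    rintro a ⟨r, hr, ha⟩
    refine Set.mem_biUnion hr ?_
    rcases ha with ha | ha | ha <;> simp [ha]
  exact Set.Finite.subset
    (h.biUnion fun r _ => ((Set.finite_singleton _).union r.pos.finite_toSet).union r.neg.finite_toSet)
    hsub

lemma isModelPos_anti {Q Q' : Set (α × Finset α)} (h : Q ⊆ Q') {J : Set α}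
    (hm : IsModelPos Q' J) : IsModelPos Q J := fun hb hbm => hm hb (h hbm)

lemma answerSet_head {P : Set (GRule α)} {A : Set α} (h : IsAnswerSet P A) {x : α} (hx : x ∈ A) :
    ∃ r ∈ P, r.head = x := by
  by_contra hc
  push_neg at hc
  refine h.2 (A \ {x}) (Set.sdiff_singleton_ssubset.mpr hx) ?_
  rintro ⟨h1, b⟩ hb hbm
  obtain ⟨r, hr, hneg, heq⟩ := hb
  have hmem : h1 ∈ A := h.1 _ ⟨r, hr, hneg, heq⟩ (fun c hcc => (hbm c hcc).1)
  refine ⟨hmem, fun he => ?_⟩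
  have : h1 = r.head := congrArg Prod.fst heq
  exact hc r hr (this ▸ (Set.mem_singleton_iff.mp he) ▸ rfl)

end ASP

namespace ASP

variable {α : Type}

/-- The bottom part of `P` w.r.t. a set `U` of atoms. -/
def botP (P : Set (GRule α)) (U : Set α) : Set (GRule α) := {r ∈ P | r.head ∈ U}

/-- Partial evaluation of the top part of `P` w.r.t. `U` and a set `X ⊆ U` of true atoms. -/
noncomputable def evalTop (P : Set (GRule α)) (U X : Set α) : Set (GRule α) :=
  {r' | ∃ r ∈ P, r.head ∉ U ∧ (∀ b ∈ r.pos, b ∈ U → b ∈ X) ∧ (∀ c ∈ r.neg, c ∈ U → c ∉ X) ∧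
    r' = ⟨r.head, r.pos.filter (· ∉ U), r.neg.filter (· ∉ U)⟩}

/-- `U` is closed in `P`: bodies of rules with head in `U` stay in `U`. -/
def ClosedU (P : Set (GRule α)) (U : Set α) : Prop :=
  ∀ r ∈ P, r.head ∈ U → (∀ b ∈ r.pos, b ∈ U) ∧ (∀ c ∈ r.neg, c ∈ U)

lemma evalTop_finite {P : Set (GRule α)} (h : P.Finite) (U X : Set α) :
    (evalTop P U X).Finite := by
  have : evalTop P U X ⊆
      (fun r : GRule α => (⟨r.head, r.pos.filter (· ∉ U), r.neg.filter (· ∉ U)⟩ : GRule α)) '' P := by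
    rintro r' ⟨r, hr, _, _, _, rfl⟩
    exact ⟨r, hr, rfl⟩
  exact (h.image _).subset this

lemma evalTop_edge {P : Set (GRule α)} {U X : Set α} :
    ∀ x y s, Edge (evalTop P U X) x y s → Edge P x y s := by
  rintro x y s ⟨r', ⟨r, hr, _, _, _, rfl⟩, hh, hb⟩
  refine ⟨r, hr, hh, ?_⟩
  rcases hb with ⟨hs, hb⟩ | ⟨hs, hb⟩
  · exact Or.inl ⟨hs, (Finset.mem_filter.mp hb).1⟩
  · exact Or.inr ⟨hs, (Finset.mem_filter.mp hb).1⟩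

lemma mem_atomsOf_evalTop {P : Set (GRule α)} {U X : Set α} {x : α}
    (hx : x ∈ atomsOf (evalTop P U X)) : x ∈ atomsOf P ∧ x ∉ U := by
  obtain ⟨r', ⟨r, hr, hhU, -, -, rfl⟩, hm⟩ := hx
  have hm' : x = r.head ∨ x ∈ r.pos.filter (· ∉ U) ∨ x ∈ r.neg.filter (· ∉ U) := hm
  rcases hm' with h | h | h
  · exact ⟨h ▸ head_mem_atomsOf hr, h ▸ hhU⟩
  · have h' := Finset.mem_filter.mp h
    exact ⟨pos_mem_atomsOf hr h'.1, h'.2⟩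
  · have h' := Finset.mem_filter.mp h
    exact ⟨neg_mem_atomsOf hr h'.1, h'.2⟩

/-- Projection half of the splitting theorem. -/
lemma answerSet_bot_of_answerSet {P : Set (GRule α)} {U A : Set α}
    (hcl : ClosedU P U) (hA : IsAnswerSet P A) : IsAnswerSet (botP P U) (A ∩ U) := by
  constructor
  · rintro ⟨h1, b⟩ ⟨r, ⟨hr, hhU⟩, hneg, heq⟩ hbm
    cases heq
    have hnegA : ∀ c ∈ r.neg, c ∉ A := fun c hc hcA =>
      hneg c hc ⟨hcA, (hcl r hr hhU).2 c hc⟩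
    have : r.head ∈ A := hA.1 _ ⟨r, hr, hnegA, rfl⟩ (fun b hb => (hbm b hb).1)
    exact ⟨this, hhU⟩
  · intro M hM hmod
    obtain ⟨x, hxAU, hxM⟩ := Set.exists_of_ssubset hM
    refine hA.2 (M ∪ (A \ U)) ?_ ?_
    · constructor
      · rintro y (hy | hy)
        · exact (hM.1 hy).1
        · exact hy.1
      · intro hsub
        rcases hsub hxAU.1 with hy | hy
        · exact hxM hy
        · exact hy.2 hxAU.2
    · rintro ⟨h1, b⟩ ⟨r, hr, hneg, heq⟩ hbm
      cases heq
      by_cases hhU : r.head ∈ U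
      · have hposU := (hcl r hr hhU).1
        have : r.head ∈ M := by
          refine hmod (r.head, r.pos) ⟨r, ⟨hr, hhU⟩, fun c hc hcAU => hneg c hc hcAU.1, rfl⟩ ?_
          intro b hb
          rcases hbm b hb with hy | hy
          · exact hy
          · exact absurd (hposU b hb) hy.2
        exact Or.inl this
      · have : r.head ∈ A := by
          refine hA.1 _ ⟨r, hr, hneg, rfl⟩ ?_
          intro b hb
          rcases hbm b hb with hy | hy
          · exact hM.1 hy |>.1
          · exact hy.1
        exact Or.inr ⟨this, hhU⟩

/-- Combination half of the splitting theorem. -/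
lemma answerSet_union {P : Set (GRule α)} {U X Y : Set α}
    (hcl : ClosedU P U) (hX : IsAnswerSet (botP P U) X) (hXU : X ⊆ U)
    (hY : IsAnswerSet (evalTop P U X) Y) (hYU : ∀ y ∈ Y, y ∉ U) :
    IsAnswerSet P (X ∪ Y) := by
  constructor
  · rintro ⟨h1, b⟩ ⟨r, hr, hneg, heq⟩ hbm
    cases heq
    by_cases hhU : r.head ∈ U
    · have hposU := (hcl r hr hhU).1
      have : r.head ∈ X := by
        refine hX.1 (r.head, r.pos) ⟨r, ⟨hr, hhU⟩, fun c hc hcX => hneg c hc (Or.inl hcX), rfl⟩ ?_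
        intro b hb
        rcases hbm b hb with hy | hy
        · exact hy
        · exact absurd (hposU b hb) (hYU b hy)
      exact Or.inl this
    · have hmem : (⟨r.head, r.pos.filter (· ∉ U), r.neg.filter (· ∉ U)⟩ : GRule α)
          ∈ evalTop P U X := by
        refine ⟨r, hr, hhU, ?_, ?_, rfl⟩
        · intro b hb hbU
          rcases hbm b hb with hy | hy
          · exact hy
          · exact absurd hbU (hYU b hy)
        · intro c hc _ hcX
          exact hneg c hc (Or.inl hcX)
      have : r.head ∈ Y := by
        refine hY.1 (r.head, r.pos.filter (· ∉ U)) ⟨_, hmem, ?_, rfl⟩ ?_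
        · intro c hc hcY
          exact hneg c (Finset.mem_filter.mp hc).1 (Or.inr hcY)
        · intro b hb
          have hb' := Finset.mem_filter.mp hb
          rcases hbm b hb'.1 with hy | hy
          · exact absurd (hXU hy) hb'.2
          · exact hy
      exact Or.inr this
  · intro M hM hmod
    -- first: M ∩ U = X
    have hMU_sub : M ∩ U ⊆ X := by
      rintro x ⟨hxM, hxU⟩
      rcases hM.1 hxM with hx | hx
      · exact hx
      · exact absurd hxU (hYU x hx)
    have hMU_mod : IsModelPos (glReduct (botP P U) X) (M ∩ U) := by
      rintro ⟨h1, b⟩ ⟨r, ⟨hr, hhU⟩, hneg, heq⟩ hbm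
      cases heq
      have hnegXY : ∀ c ∈ r.neg, c ∉ X ∪ Y := by
        intro c hc
        rintro (hcX | hcY)
        · exact hneg c hc hcX
        · exact hYU c hcY ((hcl r hr hhU).2 c hc)
      have : r.head ∈ M := hmod (r.head, r.pos) ⟨r, hr, hnegXY, rfl⟩ (fun b hb => (hbm b hb).1)
      exact ⟨this, hhU⟩
    have hMU : M ∩ U = X := by
      by_contra hne
      exact hX.2 (M ∩ U) (ssubset_of_subset_of_ne hMU_sub hne) hMU_mod
    have hXM : X ⊆ M := fun x hx => by
      have := hMU ▸ hx; exact this.1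
    -- then: M \ U models the top reduct
    have hMdU_sub : M \ U ⊆ Y := by
      rintro x ⟨hxM, hxU⟩
      rcases hM.1 hxM with hx | hx
      · exact absurd (hXU hx) hxU
      · exact hx
    have hMdU_mod : IsModelPos (glReduct (evalTop P U X) Y) (M \ U) := by
      rintro ⟨h1, b⟩ ⟨r', ⟨r, hr, hhU, hbU, hcU, rfl⟩, hneg, heq⟩ hbm
      cases heq
      have hnegXY : ∀ c ∈ r.neg, c ∉ X ∪ Y := by
        intro c hc
        rintro (hcX | hcY)
        · by_cases hcUm : c ∈ U
          · exact hcU c hc hcUm hcX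
          · exact hcUm (hXU hcX)
        · by_cases hcUm : c ∈ U
          · exact hYU c hcY hcUm
          · exact hneg c (Finset.mem_filter.mpr ⟨hc, hcUm⟩) hcY
      have hhM : r.head ∈ M := by
        refine hmod (r.head, r.pos) ⟨r, hr, hnegXY, rfl⟩ ?_
        intro b hb
        by_cases hbUm : b ∈ U
        · exact hXM (hbU b hb hbUm)
        · exact (hbm b (Finset.mem_filter.mpr ⟨hb, hbUm⟩)).1
      exact ⟨hhM, hhU⟩
    have hMdU : M \ U ≠ Y := by
      intro heq
      apply hM.2
      rintro x (hx | hx)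
      · exact hXM hx
      · have hx' : x ∈ M \ U := heq ▸ hx
        exact hx'.1
    exact hY.2 (M \ U) (ssubset_of_subset_of_ne hMdU_sub hMdU) hMdU_mod
end ASP

namespace ASP

variable {α : Type}

/-- Step 0: rules whose head occurs in their own positive body can be deleted. -/
lemma answerSet_of_noSelf {P : Set (GRule α)} {A : Set α}
    (h : IsAnswerSet {r ∈ P | r.head ∉ r.pos} A) : IsAnswerSet P A := by
  constructor
  · rintro ⟨h1, b⟩ ⟨r, hr, hneg, heq⟩ hbm
    cases heq
    by_cases hs : r.head ∈ r.pos
    · exact hbm _ hs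
    · exact h.1 (r.head, r.pos) ⟨r, ⟨hr, hs⟩, hneg, rfl⟩ hbm
  · intro M hM hmod
    refine h.2 M hM ?_
    rintro ⟨h1, b⟩ ⟨r, ⟨hr, _⟩, hneg, heq⟩ hbm
    exact hmod (h1, b) ⟨r, hr, hneg, heq⟩ hbm

/-- Step 1: an atom `a` with no rule is false; remove it from negative bodies and
delete rules using it positively. -/
lemma answerSet_of_noRule {P : Set (GRule α)} {a : α}
    (hnr : ∀ r ∈ P, r.head ≠ a) {A : Set α}
    (h : IsAnswerSet {r' | ∃ r ∈ P, a ∉ r.pos ∧ r' = ⟨r.head, r.pos, r.neg.erase a⟩} A) :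
    IsAnswerSet P A := by
  set P' : Set (GRule α) := {r' | ∃ r ∈ P, a ∉ r.pos ∧ r' = ⟨r.head, r.pos, r.neg.erase a⟩} with hP'
  have haA : a ∉ A := by
    intro haA
    obtain ⟨r', hr', hh⟩ := answerSet_head h haA
    obtain ⟨r, hr, _, rfl⟩ := hr'
    exact hnr r hr hh
  constructor
  · rintro ⟨h1, b⟩ ⟨r, hr, hneg, heq⟩ hbm
    cases heq
    by_cases hpa : a ∈ r.pos
    · exact absurd (hbm a hpa) haA
    · refine h.1 (r.head, r.pos) ⟨⟨r.head, r.pos, r.neg.erase a⟩, ⟨r, hr, hpa, rfl⟩, ?_, rfl⟩ hbm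
      intro c hc
      exact hneg c (Finset.mem_of_mem_erase hc)
  · intro M hM hmod
    refine h.2 M hM ?_
    rintro ⟨h1, b⟩ ⟨r', ⟨r, hr, hpa, rfl⟩, hneg, heq⟩ hbm
    cases heq
    refine hmod (r.head, r.pos) ⟨r, hr, ?_, rfl⟩ hbm
    intro c hc hcA
    by_cases hca : c = a
    · exact haA (hca ▸ hcA)
    · exact hneg c (Finset.mem_erase.mpr ⟨hca, hc⟩) hcA

/-- Step 2: a fact `a` is true; evaluate it away. -/
lemma answerSet_of_fact {P : Set (GRule α)} {a : α} (hf : (⟨a, ∅, ∅⟩ : GRule α) ∈ P) {A : Set α}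
    (h : IsAnswerSet {r' | ∃ r ∈ P, r.head ≠ a ∧ a ∉ r.neg ∧
      r' = ⟨r.head, r.pos.erase a, r.neg⟩} A) :
    IsAnswerSet P (A ∪ {a}) := by
  set P' : Set (GRule α) := {r' | ∃ r ∈ P, r.head ≠ a ∧ a ∉ r.neg ∧
      r' = ⟨r.head, r.pos.erase a, r.neg⟩} with hP'
  have haA : a ∉ A := by
    intro haA
    obtain ⟨r', hr', hh⟩ := answerSet_head h haA
    obtain ⟨r, _, hne, _, rfl⟩ := hr'
    exact hne hh
  constructor
  · rintro ⟨h1, b⟩ ⟨r, hr, hneg, heq⟩ hbm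
    cases heq
    by_cases hha : r.head = a
    · exact Or.inr (hha ▸ rfl)
    · have hna : a ∉ r.neg := fun hna => hneg a hna (Or.inr rfl)
      have : r.head ∈ A := by
        refine h.1 (r.head, r.pos.erase a) ⟨⟨r.head, r.pos.erase a, r.neg⟩, ⟨r, hr, hha, hna, rfl⟩,
          fun c hc hcA => hneg c hc (Or.inl hcA), rfl⟩ ?_
        intro b hb
        have hb' := Finset.mem_erase.mp hb
        rcases hbm b hb'.2 with hy | hy
        · exact hy
        · exact absurd (Set.mem_singleton_iff.mp hy) hb'.1
      exact Or.inl this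
  · intro M hM hmod
    have haM : a ∈ M := by
      by_contra haM
      exact haM (hmod (a, ∅) ⟨⟨a, ∅, ∅⟩, hf, by simp, rfl⟩ (by simp))
    have hsub : M \ {a} ⊆ A := by
      rintro x ⟨hxM, hxa⟩
      rcases hM.1 hxM with hx | hx
      · exact hx
      · exact absurd hx hxa
    have hne : M \ {a} ≠ A := by
      intro heq
      apply hM.2
      rintro x (hx | hx)
      · have : x ∈ M \ {a} := heq ▸ hx
        exact this.1
      · exact hx ▸ haM
    refine h.2 (M \ {a}) (ssubset_of_subset_of_ne hsub hne) ?_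
    rintro ⟨h1, b⟩ ⟨r', ⟨r, hr, hha, hna, rfl⟩, hneg, heq⟩ hbm
    cases heq
    have : r.head ∈ M := by
      refine hmod (r.head, r.pos) ⟨r, hr, ?_, rfl⟩ ?_
      · intro c hc
        rintro (hcA | hca)
        · exact hneg c hc hcA
        · exact hna (Set.mem_singleton_iff.mp hca ▸ hc)
      · intro b hb
        by_cases hba : b = a
        · exact hba ▸ haM
        · exact (hbm b (Finset.mem_erase.mpr ⟨hba, hb⟩)).1
    exact ⟨this, hha⟩

/-- Step 4: a trapped set `V` (every rule with head in `V` uses `V` positively)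
is unfounded; rules with head in `V` can be deleted. -/
lemma answerSet_of_trapped {P : Set (GRule α)} {V : Set α}
    (htrap : ∀ r ∈ P, r.head ∈ V → ∃ b ∈ r.pos, b ∈ V) {A : Set α}
    (h : IsAnswerSet {r ∈ P | r.head ∉ V} A) : IsAnswerSet P A := by
  have hAV : ∀ x ∈ A, x ∉ V := by
    intro x hxA hxV
    refine h.2 (A \ V) ⟨Set.diff_subset, fun hs => (hs hxA).2 hxV⟩ ?_
    rintro ⟨h1, b⟩ ⟨r, ⟨hr, hhV⟩, hneg, heq⟩ hbm
    cases heq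
    have : r.head ∈ A := h.1 (r.head, r.pos) ⟨r, ⟨hr, hhV⟩, hneg, rfl⟩ (fun b hb => (hbm b hb).1)
    exact ⟨this, hhV⟩
  constructor
  · rintro ⟨h1, b⟩ ⟨r, hr, hneg, heq⟩ hbm
    cases heq
    by_cases hhV : r.head ∈ V
    · obtain ⟨b, hb, hbV⟩ := htrap r hr hhV
      exact absurd hbV (hAV b (hbm b hb))
    · exact h.1 (r.head, r.pos) ⟨r, ⟨hr, hhV⟩, hneg, rfl⟩ hbm
  · intro M hM hmod
    refine h.2 M hM ?_
    rintro ⟨h1, b⟩ ⟨r, ⟨hr, _⟩, hneg, heq⟩ hbm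
    exact hmod (h1, b) ⟨r, hr, hneg, heq⟩ hbm

end ASP

namespace ASP

variable {α : Type}

lemma atomsOf_mono {P Q : Set (GRule α)} (h : P ⊆ Q) : atomsOf P ⊆ atomsOf Q := by
  rintro a ⟨r, hr, ha⟩; exact ⟨r, h hr, ha⟩

lemma answerSet_empty : IsAnswerSet (∅ : Set (GRule α)) ∅ := by
  constructor
  · rintro hb ⟨r, hr, -⟩
    exact absurd hr (Set.notMem_empty r)
  · intro B hB
    exact absurd (Set.empty_subset B) hB.2

/-- In a finite program there is an atom that can reach back every atom it reaches. -/
lemma exists_min_atom {P : Set (GRule α)} (hfin : P.Finite) {a0 : α} (ha0 : a0 ∈ atomsOf P) :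
    ∃ c ∈ atomsOf P, ∀ b s, Reaches P c b s → ∃ t, Reaches P b c t := by
  set bad : α → Set α := fun x => {y | (∃ s, Reaches P x y s) ∧ ¬ ∃ t, Reaches P y x t} with hbad
  have hbsub : ∀ x, bad x ⊆ atomsOf P := by
    rintro x y ⟨⟨s, hs⟩, -⟩
    exact reaches_target_mem hs
  have hbfin : ∀ x, (bad x).Finite := fun x => (atomsOf_finite hfin).subset (hbsub x)
  suffices h : ∀ k : ℕ, ∀ a ∈ atomsOf P, (bad a).ncard ≤ k →
      ∃ c ∈ atomsOf P, ∀ b s, Reaches P c b s → ∃ t, Reaches P b c t by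
    exact h (bad a0).ncard a0 ha0 le_rfl
  intro k
  induction k with
  | zero =>
    intro a ha hk
    have hempty : bad a = ∅ := (Set.ncard_eq_zero (hbfin a)).mp (Nat.le_zero.mp hk)
    refine ⟨a, ha, fun b s hr => ?_⟩
    by_contra hc
    exact absurd hempty (Set.nonempty_iff_ne_empty.mp ⟨b, ⟨s, hr⟩, hc⟩)
  | succ k ih =>
    intro a ha hk
    by_cases hne : (bad a).Nonempty
    · obtain ⟨b, hb⟩ := hne
      have hbA : b ∈ atomsOf P := hbsub a hb
      have hss : bad b ⊂ bad a := by
        constructor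
        · rintro y ⟨⟨s, hs⟩, hnr⟩
          obtain ⟨s0, hs0⟩ := hb.1
          refine ⟨⟨_, reaches_trans hs0 hs⟩, fun ⟨t, ht⟩ => ?_⟩
          exact hnr ⟨_, reaches_trans ht hs0⟩
        · intro hsub
          have : b ∈ bad b := hsub hb
          exact this.2 this.1
      have : (bad b).ncard < (bad a).ncard := Set.ncard_lt_ncard hss (hbfin a)
      exact ih b hbA (by omega)
    · rw [Set.not_nonempty_iff_eq_empty] at hne
      refine ⟨a, ha, fun b s hr => ?_⟩
      by_contra hc
      exact absurd hne (Set.nonempty_iff_ne_empty.mp ⟨b, ⟨s, hr⟩, hc⟩)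

/-- Every finite OLON-free program has an answer set. -/
theorem exists_answerSet_aux :
    ∀ n m : ℕ, ∀ P : Set (GRule α), P.Finite → (atomsOf P).ncard ≤ n →
      P.ncard ≤ m → OLONFree P → ∃ A, IsAnswerSet P A := by
  have hPempty : ∀ P : Set (GRule α), P = ∅ → ∃ A, IsAnswerSet P A := by
    rintro P rfl; exact ⟨∅, answerSet_empty⟩
  have hPofAtoms : ∀ P : Set (GRule α), atomsOf P = ∅ → P = ∅ := by
    intro P h
    rw [Set.eq_empty_iff_forall_notMem]
    intro r hr
    exact absurd (head_mem_atomsOf hr) (h ▸ Set.notMem_empty _)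
  intro n
  induction n with
  | zero =>
    intro m P hfin hat _ _
    exact hPempty P (hPofAtoms P ((Set.ncard_eq_zero (atomsOf_finite hfin)).mp (Nat.le_zero.mp hat)))
  | succ n ihn =>
    intro m
    induction m with
    | zero =>
      intro P hfin _ hcard _
      exact hPempty P ((Set.ncard_eq_zero hfin).mp (Nat.le_zero.mp hcard))
    | succ m ihm =>
      intro P hfin hat hcard holon
      by_cases hPe : P = ∅
      · exact hPempty P hPe
      -- Case: some atom has no rule
      by_cases hnorule : ∃ a ∈ atomsOf P, ∀ r ∈ P, r.head ≠ a
      · obtain ⟨a, haP, hnr⟩ := hnorule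
        set P1 : Set (GRule α) :=
          {r' | ∃ r ∈ P, a ∉ r.pos ∧ r' = ⟨r.head, r.pos, r.neg.erase a⟩} with hP1
        have hfin1 : P1.Finite := by
          refine ((hfin.image (fun r : GRule α =>
            (⟨r.head, r.pos, r.neg.erase a⟩ : GRule α))).subset ?_)
          rintro r' ⟨r, hr, -, rfl⟩
          exact ⟨r, hr, rfl⟩
        have hat1 : atomsOf P1 ⊆ atomsOf P \ {a} := by
          rintro x ⟨r', ⟨r, hr, hpa, rfl⟩, hx⟩
          have hx' : x = r.head ∨ x ∈ r.pos ∨ x ∈ r.neg.erase a := hx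
          rcases hx' with hx | hx | hx
          · exact ⟨hx ▸ head_mem_atomsOf hr, fun hxa => hnr r hr (by rw [← hx, hxa])⟩
          · exact ⟨pos_mem_atomsOf hr hx, fun hxa => hpa (hxa ▸ hx)⟩
          · have hx' := Finset.mem_erase.mp hx
            exact ⟨neg_mem_atomsOf hr hx'.2, fun hxa => hx'.1 hxa⟩
        have hcard1 : (atomsOf P1).ncard ≤ n := by
          have h1 : (atomsOf P1).ncard ≤ (atomsOf P \ {a}).ncard :=
            Set.ncard_le_ncard hat1 (atomsOf_finite hfin).diff
          have h2 : (atomsOf P \ {a}).ncard = (atomsOf P).ncard - 1 :=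
            Set.ncard_diff_singleton_of_mem haP
          omega
        have holon1 : OLONFree P1 := by
          refine olonFree_mono ?_ holon
          rintro x y s ⟨r', ⟨r, hr, -, rfl⟩, hh, hb⟩
          refine ⟨r, hr, hh, ?_⟩
          rcases hb with ⟨hs, hb⟩ | ⟨hs, hb⟩
          · exact Or.inl ⟨hs, hb⟩
          · exact Or.inr ⟨hs, Finset.mem_of_mem_erase hb⟩
        obtain ⟨A, hA⟩ := ihn P1.ncard P1 hfin1 hcard1 le_rfl holon1
        exact ⟨A, answerSet_of_noRule hnr hA⟩
      -- Case: some fact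
      by_cases hfact : ∃ a : α, (⟨a, ∅, ∅⟩ : GRule α) ∈ P
      · obtain ⟨a, hfa⟩ := hfact
        have haP : a ∈ atomsOf P := head_mem_atomsOf hfa
        set P2 : Set (GRule α) :=
          {r' | ∃ r ∈ P, r.head ≠ a ∧ a ∉ r.neg ∧ r' = ⟨r.head, r.pos.erase a, r.neg⟩} with hP2
        have hfin2 : P2.Finite := by
          refine ((hfin.image (fun r : GRule α =>
            (⟨r.head, r.pos.erase a, r.neg⟩ : GRule α))).subset ?_)
          rintro r' ⟨r, hr, -, -, rfl⟩
          exact ⟨r, hr, rfl⟩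
        have hat2 : atomsOf P2 ⊆ atomsOf P \ {a} := by
          rintro x ⟨r', ⟨r, hr, hha, hna, rfl⟩, hx⟩
          have hx' : x = r.head ∨ x ∈ r.pos.erase a ∨ x ∈ r.neg := hx
          rcases hx' with hx | hx | hx
          · exact ⟨hx ▸ head_mem_atomsOf hr, fun hxa => hha (by rw [← hx, hxa])⟩
          · have hx' := Finset.mem_erase.mp hx
            exact ⟨pos_mem_atomsOf hr hx'.2, fun hxa => hx'.1 hxa⟩
          · exact ⟨neg_mem_atomsOf hr hx, fun hxa => hna (hxa ▸ hx)⟩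
        have hcard2 : (atomsOf P2).ncard ≤ n := by
          have h1 : (atomsOf P2).ncard ≤ (atomsOf P \ {a}).ncard :=
            Set.ncard_le_ncard hat2 (atomsOf_finite hfin).diff
          have h2 : (atomsOf P \ {a}).ncard = (atomsOf P).ncard - 1 :=
            Set.ncard_diff_singleton_of_mem haP
          omega
        have holon2 : OLONFree P2 := by
          refine olonFree_mono ?_ holon
          rintro x y s ⟨r', ⟨r, hr, -, -, rfl⟩, hh, hb⟩
          refine ⟨r, hr, hh, ?_⟩
          rcases hb with ⟨hs, hb⟩ | ⟨hs, hb⟩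
          · exact Or.inl ⟨hs, Finset.mem_of_mem_erase hb⟩
          · exact Or.inr ⟨hs, hb⟩
        obtain ⟨A, hA⟩ := ihn P2.ncard P2 hfin2 hcard2 le_rfl holon2
        exact ⟨A ∪ {a}, answerSet_of_fact hfa hA⟩
      -- Case: a trapped set exists
      by_cases htrap : ∃ V : Set α, V.Nonempty ∧ V ⊆ atomsOf P ∧
          ∀ r ∈ P, r.head ∈ V → ∃ b ∈ r.pos, b ∈ V
      · obtain ⟨V, ⟨a, haV⟩, hVat, hV⟩ := htrap
        push_neg at hnorule
        obtain ⟨r0, hr0, hr0h⟩ := hnorule a (hVat haV)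
        set P' : Set (GRule α) := {r ∈ P | r.head ∉ V} with hP'
        have hss : P' ⊂ P := by
          refine ⟨fun r hr => hr.1, fun hsub => ?_⟩
          exact (hsub hr0).2 (hr0h ▸ haV)
        have hcard' : P'.ncard ≤ m := by
          have := Set.ncard_lt_ncard hss hfin
          omega
        obtain ⟨A, hA⟩ := ihm P' (hfin.subset hss.1)
          (le_trans (Set.ncard_le_ncard (atomsOf_mono hss.1) (atomsOf_finite hfin)) hat)
          hcard' (olonFree_mono (edge_mono hss.1) holon)
        exact ⟨A, answerSet_of_trapped hV hA⟩
      -- Main case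
      push_neg at hnorule hfact htrap
      obtain ⟨r0, hr0⟩ := Set.nonempty_iff_ne_empty.mpr hPe
      obtain ⟨c0, hc0, hmin⟩ := exists_min_atom hfin (head_mem_atomsOf hr0)
      set A0 : Set α := {x | x = c0 ∨ Reaches P c0 x false} with hA0def
      set C1 : Set α := {x | Reaches P c0 x true} with hC1def
      set U : Set α := A0 ∪ C1 with hUdef
      have hdisj : ∀ x, x ∈ A0 → x ∈ C1 → False := by
        rintro x (rfl | hf) hC
        · exact holon _ hC
        · obtain ⟨t, hret⟩ := hmin _ _ hC
          cases t
          · exact holon _ (by simpa using reaches_trans hC hret)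
          · exact holon _ (by simpa using reaches_trans hf hret)
      have hAA : ∀ {x y : α}, x ∈ A0 → Edge P x y false → y ∈ A0 := by
        rintro x y (rfl | hf) e
        · exact Or.inr (.single e)
        · exact Or.inr (by simpa using reaches_trans hf (.single e))
      have hAC : ∀ {x y : α}, x ∈ A0 → Edge P x y true → y ∈ C1 := by
        rintro x y (rfl | hf) e
        · exact .single e
        · exact (by simpa using reaches_trans hf (.single e) : Reaches P c0 y true)
      have hCA : ∀ {x y : α}, x ∈ C1 → Edge P x y true → y ∈ A0 := by
        intro x y hx e
        exact Or.inr (by simpa using reaches_trans hx (.single e))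
      have hCC : ∀ {x y : α}, x ∈ C1 → Edge P x y false → y ∈ C1 := by
        intro x y hx e
        exact (by simpa using reaches_trans hx (.single e) : Reaches P c0 y true)
      have hclosed : ClosedU P U := by
        intro r hr hhU
        constructor
        · intro b hb
          have e : Edge P r.head b false := ⟨r, hr, rfl, Or.inl ⟨rfl, hb⟩⟩
          rcases hhU with h | h
          · exact Or.inl (hAA h e)
          · exact Or.inr (hCC h e)
        · intro c hc
          have e : Edge P r.head c true := ⟨r, hr, rfl, Or.inr ⟨rfl, hc⟩⟩
          rcases hhU with h | h
          · exact Or.inr (hAC h e)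
          · exact Or.inl (hCA h e)
      have hC1at : C1 ⊆ atomsOf P := fun x hx => reaches_target_mem hx
      have hXstable : IsAnswerSet (botP P U) C1 := by
        constructor
        · rintro ⟨h1, b⟩ ⟨r, ⟨hr, hhU⟩, hneg, heq⟩ hbm
          cases heq
          rcases hhU with hA | hC
          · -- head in the even class: contradiction
            exfalso
            by_cases hpos : r.pos.Nonempty
            · obtain ⟨b, hb⟩ := hpos
              exact hdisj b (hAA hA ⟨r, hr, rfl, Or.inl ⟨rfl, hb⟩⟩) (hbm b hb)
            · by_cases hneg' : r.neg.Nonempty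
              · obtain ⟨c, hc⟩ := hneg'
                exact hneg c hc (hAC hA ⟨r, hr, rfl, Or.inr ⟨rfl, hc⟩⟩)
              · have hre : r = ⟨r.head, ∅, ∅⟩ := by
                  have h1 : r.pos = ∅ := Finset.not_nonempty_iff_eq_empty.mp hpos
                  have h2 : r.neg = ∅ := Finset.not_nonempty_iff_eq_empty.mp hneg'
                  have : r = ⟨r.head, r.pos, r.neg⟩ := rfl
                  rw [this, h1, h2]
                exact hfact r.head (hre ▸ hr)
          · exact hC
        · intro M hM hmod
          obtain ⟨x, hxC, hxM⟩ := Set.exists_of_ssubset hM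
          obtain ⟨r, hr, hhV, hposV⟩ := htrap (C1 \ M) ⟨x, hxC, hxM⟩
            (fun y hy => hC1at hy.1)
          have hhC : r.head ∈ C1 := hhV.1
          have hnegC : ∀ c ∈ r.neg, c ∉ C1 :=
            fun c hc hcC => hdisj c (hCA hhC ⟨r, hr, rfl, Or.inr ⟨rfl, hc⟩⟩) hcC
          have hhM : r.head ∈ M := by
            refine hmod (r.head, r.pos) ⟨r, ⟨hr, Or.inr hhC⟩, hnegC, rfl⟩ ?_
            intro b hb
            have hbC : b ∈ C1 := hCC hhC ⟨r, hr, rfl, Or.inl ⟨rfl, hb⟩⟩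
            by_contra hbM
            exact hposV b hb ⟨hbC, hbM⟩
          exact hhV.2 hhM
      -- the evaluated top program
      set e : Set (GRule α) := evalTop P U C1 with hedef
      have hfinE : e.Finite := evalTop_finite hfin U C1
      have hatE : atomsOf e ⊆ atomsOf P \ {c0} := by
        have hc0U : c0 ∈ U := Or.inl (Or.inl rfl)
        intro x hx
        obtain ⟨hx1, hx2⟩ := mem_atomsOf_evalTop hx
        exact ⟨hx1, fun hxc => hx2 (hxc ▸ hc0U)⟩
      have hcardE : (atomsOf e).ncard ≤ n := by
        have h1 : (atomsOf e).ncard ≤ (atomsOf P \ {c0}).ncard :=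
          Set.ncard_le_ncard hatE (atomsOf_finite hfin).diff
        have h2 : (atomsOf P \ {c0}).ncard = (atomsOf P).ncard - 1 :=
          Set.ncard_diff_singleton_of_mem hc0
        omega
      obtain ⟨Y, hY⟩ := ihn e.ncard e hfinE hcardE le_rfl
        (olonFree_mono evalTop_edge holon)
      have hYU : ∀ y ∈ Y, y ∉ U := by
        intro y hy hyU
        obtain ⟨r', hr', hh⟩ := answerSet_head hY hy
        obtain ⟨r, hr, hhU, -, -, rfl⟩ := hr'
        exact hhU (hh ▸ hyU)
      exact ⟨C1 ∪ Y, answerSet_union hclosed hXstable (fun x hx => Or.inr hx) hY hYU⟩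

theorem exists_answerSet {P : Set (GRule α)} (hfin : P.Finite) (holon : OLONFree P) :
    ∃ A, IsAnswerSet P A :=
  exists_answerSet_aux (atomsOf P).ncard P.ncard P hfin le_rfl le_rfl holon

end ASP

namespace ASP

variable {α ι : Type}

lemma worldProg_finite {P0 : Set (GRule α)} (hfin : P0.Finite) (atom : ι → α) (w : Finset ι) :
    (worldProg P0 atom w).Finite := by
  refine hfin.union ?_
  have hsub : {r : GRule α | ∃ i ∈ w, r = ⟨atom i, ∅, ∅⟩}
      ⊆ (fun i => (⟨atom i, ∅, ∅⟩ : GRule α)) '' ↑w := by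
    rintro r ⟨i, hi, rfl⟩
    exact ⟨i, hi, rfl⟩
  exact (w.finite_toSet.image _).subset hsub

lemma worldProg_edge {P0 : Set (GRule α)} {atom : ι → α} {w : Finset ι} :
    ∀ x y s, Edge (worldProg P0 atom w) x y s → Edge P0 x y s := by
  rintro x y s ⟨r, hr, hh, hb⟩
  rcases hr with hr | ⟨i, hi, rfl⟩
  · exact ⟨r, hr, hh, hb⟩
  · rcases hb with ⟨-, hb⟩ | ⟨-, hb⟩ <;> exact absurd hb (Finset.notMem_empty y)

/-- The key semantic lemma: for a relevance-closed subprogram `R` with `q` among its atoms,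
cautious entailment of `q` in a world coincides with cautious entailment in the restricted
world of the subprogram. -/
lemma key_iff {P0 : Set (GRule α)} {atom : ι → α} {S : Finset ι}
    (hfin : P0.Finite) (holon : OLONFree P0) {R : Set (GRule α)} (hrel : RelevanceClosed P0 R)
    {q : α} (hq : q ∈ atomsOf R) {w : Finset ι} (hw : w ⊆ S) :
    (∀ A ∈ AS (worldProg P0 atom w), q ∈ A) ↔
      (∀ A ∈ AS (worldProg R atom (w ∩ S.filter (fun i => atom i ∈ atomsOf R))), q ∈ A) := by
  set U : Set α := atomsOf R with hU
  set P : Set (GRule α) := worldProg P0 atom w with hP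
  have hfinP : P.Finite := worldProg_finite hfin atom w
  have holonP : OLONFree P := olonFree_mono worldProg_edge holon
  have hclosed : ClosedU P U := by
    rintro r (hr | ⟨i, hi, rfl⟩) hhU
    · have hrR : r ∈ R := hrel.2 r hr hhU
      exact ⟨fun b hb => pos_mem_atomsOf hrR hb, fun c hc => neg_mem_atomsOf hrR hc⟩
    · exact ⟨fun b hb => absurd hb (Finset.notMem_empty b),
        fun c hc => absurd hc (Finset.notMem_empty c)⟩
  have hbot : botP P U = worldProg R atom (w ∩ S.filter (fun i => atom i ∈ atomsOf R)) := by
    ext r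
    constructor
    · rintro ⟨hr | ⟨i, hi, rfl⟩, hhU⟩
      · exact Or.inl (hrel.2 r hr hhU)
      · exact Or.inr ⟨i, Finset.mem_inter.mpr ⟨hi, Finset.mem_filter.mpr ⟨hw hi, hhU⟩⟩, rfl⟩
    · rintro (hr | ⟨i, hi, rfl⟩)
      · exact ⟨Or.inl (hrel.1 hr), head_mem_atomsOf hr⟩
      · have hi' := Finset.mem_inter.mp hi
        exact ⟨Or.inr ⟨i, hi'.1, rfl⟩, (Finset.mem_filter.mp hi'.2).2⟩
  constructor
  · intro hall X hX
    have hX' : IsAnswerSet (botP P U) X := by rw [hbot]; exact hX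
    have hXU : X ⊆ U := by
      intro x hx
      obtain ⟨r, hr, hh⟩ := answerSet_head hX' hx
      exact hh ▸ hr.2
    obtain ⟨Y, hY⟩ := exists_answerSet (evalTop_finite hfinP U X)
      (olonFree_mono evalTop_edge holonP)
    have hYU : ∀ y ∈ Y, y ∉ U := by
      intro y hy hyU
      obtain ⟨r', hr', hh⟩ := answerSet_head hY hy
      obtain ⟨r, hr, hhU, -, -, rfl⟩ := hr'
      exact hhU (hh ▸ hyU)
    have hXY := hall (X ∪ Y) (answerSet_union hclosed hX' hXU hY hYU)
    rcases hXY with hqX | hqY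
    · exact hqX
    · exact absurd hq (hYU q hqY)
  · intro hall A hA
    have hproj := answerSet_bot_of_answerSet hclosed hA
    rw [hbot] at hproj
    exact (hall _ hproj).1

end ASP

namespace ASP

variable {ι : Type}

lemma sum_worldP_restrict (prob : ι → ℝ) (S T : Finset ι) (hT : T ⊆ S)
    (c : Finset ι → Prop) :
    ∑ w ∈ S.powerset.filter (fun w => c (w ∩ T)), worldP prob S w
      = ∑ w' ∈ T.powerset.filter (fun w' => c w'), worldP prob T w' := by
  classical
  set D : Finset ι := S \ T with hD
  have hDT : ∀ x ∈ D, x ∉ T := fun x hx => (Finset.mem_sdiff.mp hx).2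
  have step1 : ∑ w ∈ S.powerset.filter (fun w => c (w ∩ T)), worldP prob S w
      = ∑ p ∈ (T.powerset.filter (fun w' => c w')).sigma (fun _ => D.powerset),
          worldP prob T p.1 * ((∏ i ∈ p.2, prob i) * ∏ i ∈ D \ p.2, (1 - prob i)) := by
    refine Finset.sum_nbij' (fun w => ⟨w ∩ T, w \ T⟩) (fun p => p.1 ∪ p.2) ?_ ?_ ?_ ?_ ?_
    · intro w hwmem
      have hw := Finset.mem_filter.mp hwmem
      have hwS := Finset.mem_powerset.mp hw.1
      refine Finset.mem_sigma.mpr ⟨Finset.mem_filter.mpr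
        ⟨Finset.mem_powerset.mpr (Finset.inter_subset_right), hw.2⟩, ?_⟩
      refine Finset.mem_powerset.mpr ?_
      intro x hx
      have hx' := Finset.mem_sdiff.mp hx
      exact Finset.mem_sdiff.mpr ⟨hwS hx'.1, hx'.2⟩
    · rintro ⟨w', u⟩ hp
      have hp' := Finset.mem_sigma.mp hp
      have hw' := Finset.mem_filter.mp hp'.1
      have hw'T := Finset.mem_powerset.mp hw'.1
      have huD := Finset.mem_powerset.mp hp'.2
      have hinter : (w' ∪ u) ∩ T = w' := by
        ext x
        simp only [Finset.mem_inter, Finset.mem_union]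
        constructor
        · rintro ⟨hx | hx, hxT⟩
          · exact hx
          · exact absurd hxT (hDT x (huD hx))
        · intro hx
          exact ⟨Or.inl hx, hw'T hx⟩
      refine Finset.mem_filter.mpr ⟨Finset.mem_powerset.mpr ?_, by rw [hinter]; exact hw'.2⟩
      intro x hx
      rcases Finset.mem_union.mp hx with hx | hx
      · exact hT (hw'T hx)
      · exact (Finset.mem_sdiff.mp (huD hx)).1
    · intro w hwmem
      show w ∩ T ∪ w \ T = w
      rw [Finset.union_comm]
      exact Finset.sdiff_union_inter w T
    · rintro ⟨w', u⟩ hp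
      have hp' := Finset.mem_sigma.mp hp
      have hw'T := Finset.mem_powerset.mp (Finset.mem_filter.mp hp'.1).1
      have huD := Finset.mem_powerset.mp hp'.2
      have hinter : (w' ∪ u) ∩ T = w' := by
        ext x
        simp only [Finset.mem_inter, Finset.mem_union]
        constructor
        · rintro ⟨hx | hx, hxT⟩
          · exact hx
          · exact absurd hxT (hDT x (huD hx))
        · intro hx
          exact ⟨Or.inl hx, hw'T hx⟩
      have hdiffu : (w' ∪ u) \ T = u := by
        ext x
        simp only [Finset.mem_sdiff, Finset.mem_union]
        constructor
        · rintro ⟨hx | hx, hxT⟩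
          · exact absurd (hw'T hx) hxT
          · exact hx
        · intro hx
          exact ⟨Or.inr hx, hDT x (huD hx)⟩
      exact Sigma.ext (by simpa using hinter) (by simpa using hdiffu)
    · intro w hwmem
      have hw := Finset.mem_filter.mp hwmem
      have hwS := Finset.mem_powerset.mp hw.1
      have hdisj1 : Disjoint (w ∩ T) (w \ T) := by
        refine Finset.disjoint_left.mpr ?_
        intro x hx hx'
        exact (Finset.mem_sdiff.mp hx').2 (Finset.mem_inter.mp hx).2
      have hSw : S \ w = (T \ (w ∩ T)) ∪ (D \ (w \ T)) := by
        ext x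
        simp only [Finset.mem_sdiff, Finset.mem_union, Finset.mem_inter, hD]
        constructor
        · rintro ⟨hxS, hxw⟩
          by_cases hxT : x ∈ T
          · exact Or.inl ⟨hxT, fun h => hxw h.1⟩
          · exact Or.inr ⟨⟨hxS, hxT⟩, fun h => hxw h.1⟩
        · rintro (⟨hxT, hx⟩ | ⟨⟨hxS, hxT⟩, hx⟩)
          · exact ⟨hT hxT, fun hxw => hx ⟨hxw, hxT⟩⟩
          · exact ⟨hxS, fun hxw => hx ⟨hxw, hxT⟩⟩
      have hdisj2 : Disjoint (T \ (w ∩ T)) (D \ (w \ T)) := by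
        refine Finset.disjoint_left.mpr ?_
        intro x hx hx'
        exact hDT x (Finset.mem_sdiff.mp hx').1 (Finset.mem_sdiff.mp hx).1
      have h1 : ∏ i ∈ w, prob i = (∏ i ∈ w ∩ T, prob i) * ∏ i ∈ w \ T, prob i := by
        rw [← Finset.prod_union hdisj1, Finset.union_comm, Finset.sdiff_union_inter]
      have h2 : ∏ i ∈ S \ w, (1 - prob i)
          = (∏ i ∈ T \ (w ∩ T), (1 - prob i)) * ∏ i ∈ D \ (w \ T), (1 - prob i) := by
        rw [hSw, Finset.prod_union hdisj2]
      show worldP prob S w = worldP prob T (w ∩ T) * ((∏ i ∈ w \ T, prob i) * ∏ i ∈ D \ (w \ T), (1 - prob i))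
      unfold worldP
      rw [h1, h2]
      ring
  rw [step1, Finset.sum_sigma]
  refine Finset.sum_congr rfl ?_
  intro w' _
  dsimp only
  rw [← Finset.mul_sum, ← Finset.prod_add (fun i => prob i) (fun i => 1 - prob i) D]
  have : ∏ i ∈ D, (prob i + (1 - prob i)) = 1 := by
    refine Finset.prod_eq_one ?_
    intro i _
    ring
  rw [this, mul_one]

end ASP

open ASP in
/-- For an OLON-free PASP and a relevance-closed subprogram `R` of `P₀`
containing the query atom `q`, the lower probability of `q` equals the lower probability
of `q` in the PASP on `R` restricted to the probabilistic indices whose atom occurs in `R`. -/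
theorem LP_residual {α ι : Type} (P0 : Set (GRule α)) (atom : ι → α)
    (prob : ι → ℝ) (S : Finset ι) (q : α) (hpasp : IsPASP P0 atom prob S)
    (holon : OLONFree P0) (R : Set (GRule α)) (hrel : RelevanceClosed P0 R)
    (hq : q ∈ atomsOf R) :
    LP P0 atom prob S q
      = LP R atom prob (S.filter fun i => atom i ∈ atomsOf R) q := by
  obtain ⟨hfin, -, -, -⟩ := hpasp
  unfold LP
  have hfc : S.powerset.filter (fun w => ∀ A ∈ AS (worldProg P0 atom w), q ∈ A)
      = S.powerset.filter (fun w => ∀ A ∈ AS (worldProg R atom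
          (w ∩ S.filter (fun i => atom i ∈ atomsOf R))), q ∈ A) := by
    apply Finset.filter_congr
    intro w hw
    exact key_iff hfin holon hrel hq (Finset.mem_powerset.mp hw)
  rw [hfc]
  exact sum_worldP_restrict prob S (S.filter (fun i => atom i ∈ atomsOf R))
    (Finset.filter_subset _ _) (fun w' => ∀ A ∈ AS (worldProg R atom w'), q ∈ A)
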